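/- A block matrix Σ that is block strictly diagonally dominant with respect to an operator norm (i.e., ‖Σ_{i,i}^{-1}‖^{-1} > ∑_{k≠i}‖Σ_{i,k}‖ for all i, with each Σ_{i,i} invertible) is nonsingular. -/

import Mathlib

open Matrix Finset MeasureTheory Real

noncomputable def specNorm {d : ℕ} (A : Matrix (Fin d) (Fin d) ℝ) : ℝ :=
  ‖(Matrix.toEuclideanLin A).toContinuousLinearMap‖

noncomputable def specNormC {d : ℕ} (A : Matrix (Fin d) (Fin d) ℂ) : ℝ :=
  ‖(Matrix.toEuclideanLin A).toContinuousLinearMap‖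

/-- The `(i,j)` block of a blocked matrix. -/
def blk {𝕜 : Type*} {n d : ℕ} (S : Matrix (Fin n × Fin d) (Fin n × Fin d) 𝕜) (i j : Fin n) :
    Matrix (Fin d) (Fin d) 𝕜 := fun a b => S (i, a) (j, b)

/-- Smallest real eigenvalue (as the infimum of the real spectrum). -/
noncomputable def lamMin {m : Type*} [Fintype m] [DecidableEq m]
    (A : Matrix m m ℝ) : ℝ := sInf (spectrum ℝ A)

/-- Smallest real eigenvalue of a complex matrix. -/
noncomputable def lamMinC {m : Type*} [Fintype m] [DecidableEq m]
    (A : Matrix m m ℂ) : ℝ := sInf {x : ℝ | (x : ℂ) ∈ spectrum ℂ A}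

lemma spec_bound {d : ℕ} (A : Matrix (Fin d) (Fin d) ℝ) (x : Fin d → ℝ) :
    ‖(WithLp.equiv 2 (Fin d → ℝ)).symm (A *ᵥ x)‖ ≤
      specNorm A * ‖(WithLp.equiv 2 (Fin d → ℝ)).symm x‖ := by
  have h := (Matrix.toEuclideanLin A).toContinuousLinearMap.le_opNorm
    ((WithLp.equiv 2 (Fin d → ℝ)).symm x)
  have e : (Matrix.toEuclideanLin A).toContinuousLinearMap ((WithLp.equiv 2 (Fin d → ℝ)).symm x)
      = (WithLp.equiv 2 (Fin d → ℝ)).symm (A *ᵥ x) := by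
    rw [LinearMap.coe_toContinuousLinearMap']
    exact Matrix.toEuclideanLin_apply_piLp_toLp A x
  rw [e] at h
  exact h

/-- a block strictly diagonally dominant block matrix (w.r.t. the
spectral operator norm, with invertible diagonal blocks) is nonsingular. -/
theorem stmt1 {n d : ℕ} (S : Matrix (Fin n × Fin d) (Fin n × Fin d) ℝ)
    (hinv : ∀ i, IsUnit (blk S i i))
    (hdom : ∀ i, ∑ k ∈ univ \ {i}, specNorm (blk S i k) < (specNorm (blk S i i)⁻¹)⁻¹) :
    IsUnit S := by
  by_contra hS
  have hdet : S.det = 0 := by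
    by_contra hd
    exact hS ((Matrix.isUnit_iff_isUnit_det S).mpr (isUnit_iff_ne_zero.mpr hd))
  obtain ⟨v, hv0, hSv⟩ := (Matrix.exists_mulVec_eq_zero_iff).mpr hdet
  set w : Fin n → EuclideanSpace ℝ (Fin d) :=
    fun k => (WithLp.equiv 2 (Fin d → ℝ)).symm (fun a => v (k, a)) with hw
  obtain ⟨p, hp⟩ : ∃ p, v p ≠ 0 := by
    by_contra h
    push_neg at h
    exact hv0 (funext h)
  have hwk : w p.1 ≠ 0 := by
    intro h
    apply hp
    have : (fun a => v (p.1, a)) = 0 := by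
      simpa [hw] using congrArg (WithLp.equiv 2 (Fin d → ℝ)) h
    exact congrFun this p.2
  obtain ⟨i, -, hmax⟩ := Finset.exists_max_image (univ : Finset (Fin n))
    (fun k => ‖w k‖) ⟨p.1, mem_univ _⟩
  set M := ‖w i‖ with hM'
  have hM : 0 < M := lt_of_lt_of_le (norm_pos_iff.mpr hwk) (hmax p.1 (mem_univ _))
  set c := specNorm ((blk S i i)⁻¹) with hc'
  have hci := hdom i
  have hcinv : 0 < c⁻¹ :=
    lt_of_le_of_lt (Finset.sum_nonneg (fun k _ => norm_nonneg _)) hci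
  have hc : 0 < c := inv_pos.mp hcinv
  -- block equation
  have hsum : ∑ k, (blk S i k) *ᵥ (fun b => v (k, b)) = 0 := by
    funext a
    have h1 : (S *ᵥ v) (i, a) = ∑ k, ∑ b, S (i, a) (k, b) * v (k, b) := by
      simp [Matrix.mulVec, dotProduct, Fintype.sum_prod_type]
    have h2 : (∑ k, (blk S i k) *ᵥ (fun b => v (k, b))) a
        = ∑ k, ∑ b, S (i, a) (k, b) * v (k, b) := by
      simp [Matrix.mulVec, dotProduct, blk]
    rw [h2, ← h1, hSv]
    rfl
  have hdiag : (blk S i i) *ᵥ (fun b => v (i, b))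
      = - ∑ k ∈ univ \ {i}, (blk S i k) *ᵥ (fun b => v (k, b)) := by
    have := Finset.sum_eq_sum_sdiff_singleton_add (mem_univ i)
      (fun k => (blk S i k) *ᵥ (fun b => v (k, b)))
    rw [this] at hsum
    linear_combination hsum
  have hdetu : IsUnit (blk S i i).det := (Matrix.isUnit_iff_isUnit_det _).mp (hinv i)
  have hrec : (fun b => v (i, b)) = (blk S i i)⁻¹ *ᵥ ((blk S i i) *ᵥ (fun b => v (i, b))) := by
    rw [Matrix.mulVec_mulVec, Matrix.nonsing_inv_mul _ hdetu, Matrix.one_mulVec]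
  have h1 : M ≤ c * ‖(WithLp.equiv 2 (Fin d → ℝ)).symm
      ((blk S i i) *ᵥ (fun b => v (i, b)))‖ := by
    have hb := spec_bound ((blk S i i)⁻¹) ((blk S i i) *ᵥ (fun b => v (i, b)))
    have heq : w i = (WithLp.equiv 2 (Fin d → ℝ)).symm ((blk S i i)⁻¹ *ᵥ ((blk S i i) *ᵥ (fun b => v (i, b)))) :=
      by show (WithLp.equiv 2 (Fin d → ℝ)).symm (fun a => v (i, a)) = _
         exact congrArg _ hrec
    rw [hM', heq]
    exact hb
  have hsplit : ((WithLp.equiv 2 (Fin d → ℝ)).symm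
        (∑ k ∈ univ \ {i}, (blk S i k) *ᵥ (fun b => v (k, b)))
      : EuclideanSpace ℝ (Fin d))
      = ∑ k ∈ univ \ {i}, (WithLp.equiv 2 (Fin d → ℝ)).symm
        ((blk S i k) *ᵥ (fun b => v (k, b))) := by
    simp [WithLp.toLp_sum]
  have h2 : ‖(WithLp.equiv 2 (Fin d → ℝ)).symm ((blk S i i) *ᵥ (fun b => v (i, b)))‖
      ≤ ∑ k ∈ univ \ {i}, specNorm (blk S i k) * ‖w k‖ := by
    rw [hdiag]
    have : ((WithLp.equiv 2 (Fin d → ℝ)).symm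
        (- ∑ k ∈ univ \ {i}, (blk S i k) *ᵥ (fun b => v (k, b)))
        : EuclideanSpace ℝ (Fin d))
        = - ∑ k ∈ univ \ {i}, (WithLp.equiv 2 (Fin d → ℝ)).symm
          ((blk S i k) *ᵥ (fun b => v (k, b))) := by simp [WithLp.toLp_sum]
    rw [this, norm_neg]
    refine le_trans (norm_sum_le _ _) (Finset.sum_le_sum fun k _ => ?_)
    exact spec_bound (blk S i k) (fun b => v (k, b))
  have h3 : ∑ k ∈ univ \ {i}, specNorm (blk S i k) * ‖w k‖
      ≤ (∑ k ∈ univ \ {i}, specNorm (blk S i k)) * M := by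
    rw [Finset.sum_mul]
    refine Finset.sum_le_sum fun k _ => ?_
    exact mul_le_mul_of_nonneg_left (hmax k (mem_univ _)) (norm_nonneg _)
  have h4 : c * ((∑ k ∈ univ \ {i}, specNorm (blk S i k)) * M) < c * (c⁻¹ * M) := by
    apply mul_lt_mul_of_pos_left _ hc
    exact mul_lt_mul_of_pos_right hci hM
  have h5 : c * (c⁻¹ * M) = M := by
    field_simp
  nlinarith [mul_le_mul_of_nonneg_left h3 hc.le, mul_le_mul_of_nonneg_left h2 hc.le]
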